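/- Let Π be a family of deterministic stopping policies with VC dimension at most d (as Boolean classifiers on List O), d ≥ 1, let g : List O → ℝ be a reward function, and let x₁, …, xₙ be n fixed full trajectories of horizon H with n·H ≥ d. Define the empirical value estimate of a policy π as V̂_π = (1/n)·Σ_{i=1}^{n} R_π(xᵢ). Then the set of empirical value estimates { V̂_π : π ∈ Π } ⊆ ℝ has cardinality at most (e·n·H/d)^d. -/

import Mathlib

open scoped BigOperators

/-- The `t`-prefix of a full trajectory `x : Fin H → O`, i.e. the list `[x 0, …, x (t-1)]`. -/
def trajPrefix {O : Type*} {H : ℕ} (x : Fin H → O) (t : ℕ) : List O :=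
  (List.ofFn x).take t

open Classical in
/-- The stopping time of policy `π` on full trajectory `x`: the least `t` with
`1 ≤ t ≤ H` such that `π` halts on the `t`-prefix of `x`, and `H` if no such `t` exists. -/
noncomputable def stopTime {O : Type*} (H : ℕ) (π : List O → Bool) (x : Fin H → O) : ℕ :=
  if h : ∃ t, (1 ≤ t ∧ t ≤ H) ∧ π (trajPrefix x t) = true then Nat.find h else H


lemma stopTime_congr {O : Type*} {H : ℕ} (π π' : List O → Bool) (x : Fin H → O)
    (h : ∀ t, 1 ≤ t → t ≤ H → π (trajPrefix x t) = π' (trajPrefix x t)) :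
    stopTime H π x = stopTime H π' x := by
  classical
  have hiff : ∀ t, ((1 ≤ t ∧ t ≤ H) ∧ π (trajPrefix x t) = true) ↔
      ((1 ≤ t ∧ t ≤ H) ∧ π' (trajPrefix x t) = true) := by
    intro t
    by_cases ht : 1 ≤ t ∧ t ≤ H
    · rw [h t ht.1 ht.2]
    · simp [ht]
  unfold stopTime
  by_cases h1 : ∃ t, (1 ≤ t ∧ t ≤ H) ∧ π (trajPrefix x t) = true
  · have h2 : ∃ t, (1 ≤ t ∧ t ≤ H) ∧ π' (trajPrefix x t) = true :=
      let ⟨t, ht⟩ := h1; ⟨t, (hiff t).1 ht⟩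
    rw [dif_pos h1, dif_pos h2]
    exact le_antisymm (Nat.find_le ((hiff _).2 (Nat.find_spec h2)))
      (Nat.find_le ((hiff _).1 (Nat.find_spec h1)))
  · have h2 : ¬ ∃ t, (1 ≤ t ∧ t ≤ H) ∧ π' (trajPrefix x t) = true :=
      fun ⟨t, ht⟩ => h1 ⟨t, (hiff t).2 ht⟩
    rw [dif_neg h1, dif_neg h2]

lemma sum_choose_le_pow (d m : ℕ) (hd : 1 ≤ d) (hdm : d ≤ m) :
    ((∑ k ∈ Finset.Iic d, m.choose k : ℕ) : ℝ) ≤ (Real.exp 1 * m / d) ^ d := by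
  have hm0 : 0 < m := lt_of_lt_of_le hd hdm
  have hm : (0:ℝ) < m := by exact_mod_cast hm0
  have hdr : (0:ℝ) < d := by exact_mod_cast hd
  set r : ℝ := (d : ℝ) / m with hr
  have hr0 : 0 < r := by positivity
  have hr1 : r ≤ 1 := by
    rw [hr, div_le_one hm]; exact_mod_cast hdm
  have key1 : ((∑ k ∈ Finset.Iic d, m.choose k : ℕ) : ℝ) * r ^ d
      ≤ ∑ k ∈ Finset.Iic d, (m.choose k : ℝ) * r ^ k := by
    push_cast
    rw [Finset.sum_mul]
    refine Finset.sum_le_sum fun k hk => ?_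
    have : r ^ d ≤ r ^ k := pow_le_pow_of_le_one hr0.le hr1 (Finset.mem_Iic.1 hk)
    have hc : (0:ℝ) ≤ (m.choose k : ℝ) := by positivity
    nlinarith
  have key2 : ∑ k ∈ Finset.Iic d, (m.choose k : ℝ) * r ^ k
      ≤ ∑ k ∈ Finset.range (m+1), (m.choose k : ℝ) * r ^ k := by
    refine Finset.sum_le_sum_of_subset_of_nonneg ?_ (fun k _ _ => by positivity)
    intro k hk
    simp only [Finset.mem_Iic] at hk
    simp only [Finset.mem_range]
    omega
  have key3 : ∑ k ∈ Finset.range (m+1), (m.choose k : ℝ) * r ^ k = (1 + r) ^ m := by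
    rw [add_comm 1 r, add_pow]
    refine Finset.sum_congr rfl fun k _ => ?_
    rw [one_pow]
    ring
  have key4 : (1 + r) ^ m ≤ Real.exp 1 ^ d := by
    calc (1 + r) ^ m ≤ Real.exp r ^ m := by
          apply pow_le_pow_left₀ (by positivity)
          linarith [Real.add_one_le_exp r]
      _ = Real.exp (m * r) := by rw [← Real.exp_nat_mul]
      _ = Real.exp d := by
          congr 1
          rw [hr]
          field_simp
      _ = Real.exp 1 ^ d := by rw [← Real.exp_nat_mul, mul_one]
  have hfin : ((∑ k ∈ Finset.Iic d, m.choose k : ℕ) : ℝ) * r ^ d ≤ Real.exp 1 ^ d :=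
    key1.trans (key2.trans (key3.le.trans key4))
  have hrpow : 0 < r ^ d := by positivity
  rw [← le_div_iff₀ hrpow] at hfin
  refine hfin.trans_eq ?_
  rw [hr, div_pow, mul_div_assoc, mul_pow, div_pow]
  have h1 : ((d:ℝ))^d ≠ 0 := by positivity
  have h2 : ((m:ℝ))^d ≠ 0 := by positivity
  field_simp

/-- The return of policy `π` on full trajectory `x` under reward function `g`. -/
noncomputable def policyReturn {O : Type*} {H : ℕ} (g : List O → ℝ) (π : List O → Bool)
    (x : Fin H → O) : ℝ :=
  g (trajPrefix x (stopTime H π x))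

/-- A family `Π` of policies shatters a finite set `S` of lists if every Boolean
labeling of `S` is realized by some member of `Π`. -/
def ShattersLists {O : Type*} (P : Set (List O → Bool)) (S : Finset (List O)) : Prop :=
  ∀ f : List O → Bool, ∃ π ∈ P, ∀ l ∈ S, π l = f l

/-- The set of empirical value estimates `V̂_π = (1/n)·Σᵢ R_π(xᵢ)` over a VC-dimension-`d`
policy class has cardinality at most `(e·n·H/d)^d`. -/
theorem empirical_values_card_le {O : Type*} {H n d : ℕ} (hH : 1 ≤ H) (hd : 1 ≤ d)
    (P : Set (List O → Bool))
    (hVC : ∀ S : Finset (List O), S.card = d + 1 → ¬ ShattersLists P S)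
    (g : List O → ℝ)
    (x : Fin n → (Fin H → O)) (hnH : d ≤ n * H) :
    ((Set.ncard {v : ℝ | ∃ π ∈ P,
        v = (1 / (n : ℝ)) * ∑ i : Fin n, policyReturn g π (x i)} : ℝ))
      ≤ (Real.exp 1 * n * H / d) ^ d := by
  classical
  set V : Set ℝ := {v : ℝ | ∃ π ∈ P,
      v = (1 / (n : ℝ)) * ∑ i : Fin n, policyReturn g π (x i)} with hV
  set T : Finset (List O) :=
    Finset.image (fun p : Fin n × Fin H => trajPrefix (x p.1) ((p.2 : ℕ) + 1)) Finset.univ with hT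
  have hmemT : ∀ (i : Fin n) (t : ℕ), 1 ≤ t → t ≤ H → trajPrefix (x i) t ∈ T := by
    intro i t h1 h2
    refine Finset.mem_image.2 ⟨(i, ⟨t - 1, by omega⟩), Finset.mem_univ _, ?_⟩
    simp only
    congr 1
    omega
  have hTcard : T.card ≤ n * H := by
    calc T.card ≤ (Finset.univ : Finset (Fin n × Fin H)).card := Finset.card_image_le
      _ = n * H := by simp
  let ψ : Finset {l // l ∈ T} → (List O → Bool) := fun u l =>
    if h : l ∈ T then decide ((⟨l, h⟩ : {l // l ∈ T}) ∈ u) else false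
  let Φ : Finset {l // l ∈ T} → ℝ :=
    fun u => (1 / (n : ℝ)) * ∑ i : Fin n, policyReturn g (ψ u) (x i)
  let 𝒜 : Finset (Finset {l // l ∈ T}) :=
    Finset.univ.filter (fun u => ∃ π ∈ P, ∀ a : {l // l ∈ T}, a ∈ u ↔ π a.val = true)
  have hsub : V ⊆ Φ '' ↑𝒜 := by
    rintro v ⟨π, hπ, rfl⟩
    refine ⟨Finset.univ.filter (fun a : {l // l ∈ T} => π a.val = true), ?_, ?_⟩
    · simp only [𝒜, Finset.coe_filter, Set.mem_setOf_eq, Finset.mem_univ, true_and]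
      exact ⟨π, hπ, fun a => by simp⟩
    · show (1 / (n : ℝ)) * ∑ i : Fin n, policyReturn g (ψ _) (x i) = _
      congr 1
      refine Finset.sum_congr rfl fun i _ => ?_
      unfold policyReturn
      have hst : stopTime H (ψ (Finset.univ.filter
          (fun a : {l // l ∈ T} => π a.val = true))) (x i) = stopTime H π (x i) := by
        apply stopTime_congr
        intro t h1 h2
        have hmem := hmemT i t h1 h2
        simp [ψ, hmem]
      rw [hst]
  have h1 : V.ncard ≤ 𝒜.card := by
    calc V.ncard ≤ (Φ '' ↑𝒜).ncard :=
          Set.ncard_le_ncard hsub (𝒜.finite_toSet.image _)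
      _ ≤ (↑𝒜 : Set (Finset {l // l ∈ T})).ncard := Set.ncard_image_le 𝒜.finite_toSet
      _ = 𝒜.card := by simp [Set.ncard_coe_finset]
  have hvc : 𝒜.vcDim ≤ d := by
    refine Finset.sup_le fun s hs => ?_
    by_contra hcard
    push_neg at hcard
    obtain ⟨s', hs's, hs'card⟩ := Finset.exists_subset_card_eq (show d + 1 ≤ s.card by omega)
    have hshat : 𝒜.Shatters s' := (Finset.mem_shatterer.1 hs).mono_right hs's
    have hScard : (s'.image Subtype.val).card = d + 1 := by
      rw [Finset.card_image_of_injective _ Subtype.val_injective, hs'card]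
    refine hVC _ hScard ?_
    intro f
    obtain ⟨u, hu𝒜, hu⟩ := hshat (Finset.filter_subset (fun a => f a.val = true) s')
    obtain ⟨π, hπP, hπu⟩ := (Finset.mem_filter.1 hu𝒜).2
    refine ⟨π, hπP, ?_⟩
    intro l hl
    obtain ⟨a, ha, rfl⟩ := Finset.mem_image.1 hl
    rw [Bool.eq_iff_iff]
    constructor
    · intro hπt
      have hm : a ∈ s' ∩ u := Finset.mem_inter.2 ⟨ha, (hπu a).2 hπt⟩
      rw [hu] at hm
      exact (Finset.mem_filter.1 hm).2
    · intro hf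
      have hm : a ∈ s' ∩ u := by rw [hu]; exact Finset.mem_filter.2 ⟨ha, hf⟩
      exact (hπu a).1 (Finset.mem_inter.1 hm).2
  have h2 : 𝒜.card ≤ ∑ k ∈ Finset.Iic d, (n * H).choose k := by
    calc 𝒜.card ≤ 𝒜.shatterer.card := Finset.card_le_card_shatterer 𝒜
      _ ≤ ∑ k ∈ Finset.Iic 𝒜.vcDim, (Fintype.card {l // l ∈ T}).choose k :=
          Finset.card_shatterer_le_sum_vcDim
      _ ≤ ∑ k ∈ Finset.Iic d, (Fintype.card {l // l ∈ T}).choose k :=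
          Finset.sum_le_sum_of_subset (Finset.Iic_subset_Iic.2 hvc)
      _ ≤ ∑ k ∈ Finset.Iic d, (n * H).choose k :=
          Finset.sum_le_sum fun k _ =>
            Nat.choose_le_choose k (by simpa [Fintype.card_coe] using hTcard)
  calc (V.ncard : ℝ) ≤ ((∑ k ∈ Finset.Iic d, (n * H).choose k : ℕ) : ℝ) := by
        exact_mod_cast h1.trans h2
    _ ≤ (Real.exp 1 * (↑(n * H)) / d) ^ d := sum_choose_le_pow d (n * H) hd hnH
    _ = (Real.exp 1 * n * H / d) ^ d := by push_cast; ring
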